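/- Let G = (V,E) be a finite connected graph. Let C be the collection of edge subsets E' ⊆ E such that (V,E') is connected, and T ⊆ C the collection of spanning trees. Then there exists a map R : T → C with R(T) ⊇ T for every spanning tree T, such that C is the disjoint union over spanning trees T of the Boolean intervals [T, R(T)] = {E' : T ⊆ E' ⊆ R(T)}. -/

import Mathlib

open scoped Classical

namespace StmtAux

open SimpleGraph Finset

variable {V : Type*} [Fintype V]

lemma edgeSet_coe {G : SimpleGraph V} {S : Finset (Sym2 V)} (hS : S ⊆ G.edgeFinset) :
    (fromEdgeSet (↑S : Set (Sym2 V))).edgeSet = ↑S := by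
  rw [edgeSet_fromEdgeSet]
  ext e
  simp only [Set.mem_diff, Finset.mem_coe, Set.mem_setOf_eq, and_iff_left_iff_imp]
  intro he
  exact G.not_isDiag_of_mem_edgeSet (mem_edgeFinset.mp (hS he))

lemma edgeFinset_coe {G : SimpleGraph V} {S : Finset (Sym2 V)} (hS : S ⊆ G.edgeFinset) :
    (fromEdgeSet (↑S : Set (Sym2 V))).edgeFinset = S := by
  ext e
  rw [mem_edgeFinset, edgeSet_coe hS, Finset.mem_coe]

lemma connected_of_adj_reachable {H H' : SimpleGraph V} (h : H.Connected)
    (hadj : ∀ x y, H.Adj x y → H'.Reachable x y) : H'.Connected := by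
  have hne : Nonempty V := h.nonempty
  refine ⟨fun x y => ?_⟩
  obtain ⟨p⟩ := h.preconnected x y
  induction p with
  | nil => exact Reachable.refl _
  | cons h' p ih => exact (hadj _ _ h').trans ih

lemma connected_delete_cycle_edge {H : SimpleGraph V} (h : H.Connected) {u0 : V}
    (c : H.Walk u0 u0) (hc : c.IsCycle) {f : Sym2 V} (hf : f ∈ c.edges) :
    (H \ fromEdgeSet {f}).Connected := by
  induction f using Sym2.ind with
  | _ a b =>
    have hreach : (H \ fromEdgeSet {s(a, b)}).Reachable a b :=
      (adj_and_reachable_delete_edges_iff_exists_cycle.mpr ⟨u0, c, hc, hf⟩).2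
    apply connected_of_adj_reachable h
    intro x y hxy
    by_cases hxy' : s(x, y) = s(a, b)
    · rw [Sym2.eq_iff] at hxy'
      rcases hxy' with ⟨rfl, rfl⟩ | ⟨rfl, rfl⟩
      · exact hreach
      · exact hreach.symm
    · refine Adj.reachable ?_
      rw [sdiff_adj]
      refine ⟨hxy, ?_⟩
      rw [fromEdgeSet_adj]
      simp [hxy']

lemma fromEdgeSet_erase (S : Finset (Sym2 V)) (f : Sym2 V) :
    fromEdgeSet (↑(S.erase f) : Set (Sym2 V)) = fromEdgeSet (↑S) \ fromEdgeSet {f} := by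
  ext x y
  simp only [fromEdgeSet_adj, Finset.coe_erase, Set.mem_diff, Finset.mem_coe, sdiff_adj,
    Set.mem_singleton_iff]
  tauto

lemma exists_tree_subset (G : SimpleGraph V) :
    ∀ (n : ℕ) (S : Finset (Sym2 V)), S.card = n → S ⊆ G.edgeFinset →
      (fromEdgeSet (↑S : Set (Sym2 V))).Connected →
      ∃ T, T ⊆ S ∧ (fromEdgeSet (↑T : Set (Sym2 V))).IsTree := by
  intro n
  induction n using Nat.strong_induction_on with
  | _ n ih =>
    intro S hcard hSG hconn
    by_cases hac : (fromEdgeSet (↑S : Set (Sym2 V))).IsAcyclic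
    · exact ⟨S, Finset.Subset.refl S, ⟨hconn, hac⟩⟩
    · rw [IsAcyclic] at hac
      push_neg at hac
      obtain ⟨v, c, hc⟩ := hac
      obtain ⟨f, hf⟩ : ∃ f, f ∈ c.edges := by
        cases c with
        | nil => exact absurd hc Walk.IsCycle.not_of_nil
        | cons h p => exact ⟨_, List.mem_cons_self⟩
      have hfS : f ∈ S := by
        have := c.edges_subset_edgeSet hf
        rwa [edgeSet_coe hSG, Finset.mem_coe] at this
      have hconn' : (fromEdgeSet (↑(S.erase f) : Set (Sym2 V))).Connected := by
        rw [fromEdgeSet_erase]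
        exact connected_delete_cycle_edge hconn c hc hf
      obtain ⟨T, hT, htree⟩ := ih (S.erase f).card
        (by rw [← hcard]; exact Finset.card_erase_lt_of_mem hfS) _ rfl
        (fun x hx => hSG (Finset.mem_of_mem_erase hx)) hconn'
      exact ⟨T, hT.trans (Finset.erase_subset f S), htree⟩

lemma isTree_of_connected_card (G : SimpleGraph V) {S : Finset (Sym2 V)} (hS : S ⊆ G.edgeFinset)
    (hconn : (fromEdgeSet (↑S : Set (Sym2 V))).Connected)
    (hcard : S.card + 1 = Fintype.card V) :
    (fromEdgeSet (↑S : Set (Sym2 V))).IsTree := by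
  obtain ⟨T, hTS, htree⟩ := exists_tree_subset G S.card S rfl hS hconn
  have hTcard : T.card + 1 = Fintype.card V := by
    have := htree.card_edgeFinset
    rwa [edgeFinset_coe (hTS.trans hS)] at this
  have hST : T = S := Finset.eq_of_subset_of_card_le hTS (by omega)
  rwa [← hST]

lemma exchange (G : SimpleGraph V) {T : Finset (Sym2 V)} (hTG : T ⊆ G.edgeFinset)
    (htree : (fromEdgeSet (↑T : Set (Sym2 V))).IsTree) {e : Sym2 V} (heG : e ∈ G.edgeFinset)
    (heT : e ∉ T) {u v : V} (hee : e = s(u, v))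
    (p : (fromEdgeSet (↑T : Set (Sym2 V))).Walk u v) (hp : p.IsPath)
    {f : Sym2 V} (hf : f ∈ p.edges) :
    (fromEdgeSet (↑(T.erase f ∪ {e}) : Set (Sym2 V))).IsTree := by
  have hfT : f ∈ T := by
    have := p.edges_subset_edgeSet hf
    rwa [edgeSet_coe hTG, Finset.mem_coe] at this
  have hfe : f ≠ e := fun h => heT (h ▸ hfT)
  have huv : u ≠ v := by
    have hd : ¬e.IsDiag := G.not_isDiag_of_mem_edgeSet (mem_edgeFinset.mp heG)
    rw [hee] at hd
    simpa using hd
  set M : Finset (Sym2 V) := T ∪ {e} with hM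
  have hMG : M ⊆ G.edgeFinset := by
    intro x hx
    rcases Finset.mem_union.mp hx with h | h
    · exact hTG h
    · rw [Finset.mem_singleton] at h; exact h ▸ heG
  have heM : e ∈ M := Finset.mem_union_right _ (Finset.mem_singleton_self e)
  have hMconn : (fromEdgeSet (↑M : Set (Sym2 V))).Connected :=
    htree.isConnected.mono (fromEdgeSet_mono (Finset.coe_subset.mpr Finset.subset_union_left))
  have hedges : ∀ x ∈ p.edges, x ∈ (fromEdgeSet (↑M : Set (Sym2 V))).edgeSet := by
    intro x hx
    rw [edgeSet_coe hMG, Finset.mem_coe]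
    have := p.edges_subset_edgeSet hx
    rw [edgeSet_coe hTG, Finset.mem_coe] at this
    exact Finset.mem_union_left _ this
  set p' := p.transfer _ hedges with hp'def
  have hp' : p'.IsPath := by
    rw [Walk.isPath_def] at hp ⊢
    rwa [hp'def, Walk.support_transfer]
  have hadj : (fromEdgeSet (↑M : Set (Sym2 V))).Adj v u := by
    rw [fromEdgeSet_adj]
    refine ⟨?_, huv.symm⟩
    rw [Sym2.eq_swap, ← hee]
    exact Finset.mem_coe.mpr heM
  have hcyc : (Walk.cons hadj p').IsCycle := by
    rw [Walk.cons_isCycle_iff]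
    refine ⟨hp', ?_⟩
    rw [hp'def, Walk.edges_transfer, Sym2.eq_swap, ← hee]
    intro hmem
    have := p.edges_subset_edgeSet hmem
    rw [edgeSet_coe hTG, Finset.mem_coe] at this
    exact heT this
  have hfc : f ∈ (Walk.cons hadj p').edges := by
    rw [Walk.edges_cons, hp'def, Walk.edges_transfer]
    exact List.mem_cons_of_mem _ hf
  have hconn2 := connected_delete_cycle_edge hMconn (Walk.cons hadj p') hcyc hfc
  rw [← fromEdgeSet_erase] at hconn2
  have hME : M.erase f = T.erase f ∪ {e} := by
    ext x
    simp only [hM, Finset.mem_erase, Finset.mem_union, Finset.mem_singleton]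
    constructor
    · rintro ⟨hxf, hx | rfl⟩
      · exact Or.inl ⟨hxf, hx⟩
      · exact Or.inr rfl
    · rintro (⟨hxf, hx⟩ | rfl)
      · exact ⟨hxf, Or.inl hx⟩
      · exact ⟨Ne.symm hfe, Or.inr rfl⟩
  rw [hME] at hconn2
  refine isTree_of_connected_card G ?_ hconn2 ?_
  · rw [← hME]
    exact (Finset.erase_subset f M).trans hMG
  · have h1 : T.card + 1 = Fintype.card V := by
      have := htree.card_edgeFinset
      rwa [edgeFinset_coe hTG] at this
    have h2 : (T.erase f).card = T.card - 1 := Finset.card_erase_of_mem hfT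
    have h3 : e ∉ T.erase f := fun h => heT (Finset.mem_of_mem_erase h)
    rw [Finset.card_union_of_disjoint (Finset.disjoint_singleton_right.mpr h3),
      Finset.card_singleton, h2]
    have h4 : 1 ≤ T.card := Finset.card_pos.mpr ⟨f, hfT⟩
    omega

/-- the exchange condition: `e` is heavier than any tree edge it could replace. -/
def Cond (w : Sym2 V → ℕ) (T : Finset (Sym2 V)) (e : Sym2 V) : Prop :=
  ∀ f ∈ T, (fromEdgeSet (↑(T.erase f ∪ {e}) : Set (Sym2 V))).IsTree → w f < w e

lemma uniq_aux (G : SimpleGraph V) (w : Sym2 V → ℕ)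
    {E' T1 T2 : Finset (Sym2 V)} (hE : E' ⊆ G.edgeFinset)
    (hT1E : T1 ⊆ E') (ht1 : (fromEdgeSet (↑T1 : Set (Sym2 V))).IsTree)
    (hT2E : T2 ⊆ E') (ht2 : (fromEdgeSet (↑T2 : Set (Sym2 V))).IsTree)
    (hc2 : ∀ e ∈ E', e ∉ T2 → Cond w T2 e)
    {e : Sym2 V} (he1 : e ∈ T1) (he2 : e ∉ T2)
    (hmin : ∀ x, (x ∈ T1 ∧ x ∉ T2) ∨ (x ∈ T2 ∧ x ∉ T1) → w e ≤ w x) : False := by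
  have hT1G : T1 ⊆ G.edgeFinset := hT1E.trans hE
  have hT2G : T2 ⊆ G.edgeFinset := hT2E.trans hE
  have heG : e ∈ G.edgeFinset := hT1G he1
  revert he1 he2 hmin heG
  induction e using Sym2.ind with
  | _ u v =>
    intro he1 he2 hmin heG
    have huv : u ≠ v := by
      have hd : ¬(s(u, v)).IsDiag := G.not_isDiag_of_mem_edgeSet (mem_edgeFinset.mp heG)
      simpa using hd
    obtain ⟨p0⟩ := ht2.isConnected.preconnected u v
    obtain ⟨p, hp⟩ : ∃ p : (fromEdgeSet (↑T2 : Set (Sym2 V))).Walk u v, p.IsPath :=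
      ⟨p0.toPath, p0.toPath.prop⟩
    by_cases hcase : ∀ x ∈ p.edges, x ∈ T1
    · -- all edges of p lie in T1: build a cycle in T1
      have hedges : ∀ x ∈ p.edges, x ∈ (fromEdgeSet (↑T1 : Set (Sym2 V))).edgeSet := by
        intro x hx
        rw [edgeSet_coe hT1G, Finset.mem_coe]
        exact hcase x hx
      set p' := p.transfer _ hedges with hp'def
      have hp'path : p'.IsPath := by
        rw [Walk.isPath_def] at hp ⊢
        rwa [hp'def, Walk.support_transfer]
      have hadj : (fromEdgeSet (↑T1 : Set (Sym2 V))).Adj v u := by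
        rw [fromEdgeSet_adj]
        refine ⟨?_, huv.symm⟩
        rw [Sym2.eq_swap]
        exact Finset.mem_coe.mpr he1
      have hcyc : (Walk.cons hadj p').IsCycle := by
        rw [Walk.cons_isCycle_iff]
        refine ⟨hp'path, ?_⟩
        rw [hp'def, Walk.edges_transfer, Sym2.eq_swap]
        intro hmem
        have := p.edges_subset_edgeSet hmem
        rw [edgeSet_coe hT2G, Finset.mem_coe] at this
        exact he2 this
      exact ((isTree_iff _).mp ht1).2 _ hcyc
    · push_neg at hcase
      obtain ⟨f, hfp, hfT1⟩ := hcase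
      have hfT2 : f ∈ T2 := by
        have := p.edges_subset_edgeSet hfp
        rwa [edgeSet_coe hT2G, Finset.mem_coe] at this
      have htree' := exchange G hT2G ht2 heG he2 rfl p hp hfp
      have hlt : w f < w s(u, v) := hc2 _ (hT1E he1) he2 f hfT2 htree'
      have hge : w s(u, v) ≤ w f := hmin f (Or.inr ⟨hfT2, hfT1⟩)
      omega

lemma tree_unique (G : SimpleGraph V) (w : Sym2 V → ℕ)
    {E' T1 T2 : Finset (Sym2 V)} (hE : E' ⊆ G.edgeFinset)
    (hT1E : T1 ⊆ E') (ht1 : (fromEdgeSet (↑T1 : Set (Sym2 V))).IsTree)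
    (hc1 : ∀ e ∈ E', e ∉ T1 → Cond w T1 e)
    (hT2E : T2 ⊆ E') (ht2 : (fromEdgeSet (↑T2 : Set (Sym2 V))).IsTree)
    (hc2 : ∀ e ∈ E', e ∉ T2 → Cond w T2 e) : T1 = T2 := by
  by_contra hne
  have hΔ : ((T1 \ T2) ∪ (T2 \ T1)).Nonempty := by
    rw [Finset.nonempty_iff_ne_empty]
    intro h
    rw [Finset.union_eq_empty, Finset.sdiff_eq_empty_iff_subset,
      Finset.sdiff_eq_empty_iff_subset] at h
    exact hne (Finset.Subset.antisymm h.1 h.2)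
  obtain ⟨e, heΔ, hemin⟩ := Finset.exists_min_image _ w hΔ
  have hmin : ∀ x, (x ∈ T1 ∧ x ∉ T2) ∨ (x ∈ T2 ∧ x ∉ T1) → w e ≤ w x := by
    intro x hx
    refine hemin x ?_
    rw [Finset.mem_union, Finset.mem_sdiff, Finset.mem_sdiff]
    exact hx
  rcases Finset.mem_union.mp heΔ with h | h
  · obtain ⟨he1, he2⟩ := Finset.mem_sdiff.mp h
    exact absurd (uniq_aux G w hE hT1E ht1 hT2E ht2 hc2 he1 he2 hmin) id
  · obtain ⟨he2, he1⟩ := Finset.mem_sdiff.mp h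
    exact absurd (uniq_aux G w hE hT2E ht2 hT1E ht1 hc1 he2 he1
      (fun x hx => hmin x hx.symm)) id

lemma exists_min_tree (G : SimpleGraph V) (w : Sym2 V → ℕ) (hw : Function.Injective w)
    {E' : Finset (Sym2 V)} (hE : E' ⊆ G.edgeFinset)
    (hconn : (fromEdgeSet (↑E' : Set (Sym2 V))).Connected) :
    ∃ T, T ⊆ E' ∧ (fromEdgeSet (↑T : Set (Sym2 V))).IsTree ∧
      ∀ e ∈ E', e ∉ T → Cond w T e := by
  set 𝒯 := E'.powerset.filter (fun T : Finset (Sym2 V) => (fromEdgeSet (↑T : Set (Sym2 V))).IsTree) with h𝒯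
  have hne : 𝒯.Nonempty := by
    obtain ⟨T, hTE, ht⟩ := exists_tree_subset G E'.card E' rfl hE hconn
    exact ⟨T, Finset.mem_filter.mpr ⟨Finset.mem_powerset.mpr hTE, ht⟩⟩
  obtain ⟨T, hT𝒯, hmin⟩ := Finset.exists_min_image 𝒯 (fun T => ∑ x ∈ T, w x) hne
  rw [h𝒯, Finset.mem_filter, Finset.mem_powerset] at hT𝒯
  obtain ⟨hTE, ht⟩ := hT𝒯
  refine ⟨T, hTE, ht, ?_⟩
  intro e heE heT f hfT htree'
  have hT'E : T.erase f ∪ {e} ⊆ E' := by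
    intro x hx
    rcases Finset.mem_union.mp hx with h | h
    · exact hTE (Finset.mem_of_mem_erase h)
    · rw [Finset.mem_singleton] at h; exact h ▸ heE
  have hle : ∑ x ∈ T, w x ≤ ∑ x ∈ T.erase f ∪ {e}, w x :=
    hmin _ (Finset.mem_filter.mpr ⟨Finset.mem_powerset.mpr hT'E, htree'⟩)
  have h3 : e ∉ T.erase f := fun h => heT (Finset.mem_of_mem_erase h)
  have hsum1 : ∑ x ∈ T.erase f ∪ {e}, w x = (∑ x ∈ T.erase f, w x) + w e := by
    rw [Finset.sum_union (Finset.disjoint_singleton_right.mpr h3), Finset.sum_singleton]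
  have hsum2 : (∑ x ∈ T.erase f, w x) + w f = ∑ x ∈ T, w x :=
    Finset.sum_erase_add T w hfT
  have hne' : w f ≠ w e := by
    intro h
    have hfe : f = e := hw h
    exact heT (hfe ▸ hfT)
  omega

end StmtAux

/-- Partitionability of the complex of connected spanning subgraphs: there is a map `R`
from spanning trees to connected spanning edge sets with `T ⊆ R T`, such that the
connected spanning edge sets are the disjoint union of the Boolean intervals `[T, R T]`. -/
theorem stmt_10 {V : Type*} [Fintype V] (G : SimpleGraph V) (hG : G.Connected) :
    ∃ R : Finset (Sym2 V) → Finset (Sym2 V),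
      (∀ T : Finset (Sym2 V), T ⊆ G.edgeFinset →
          (SimpleGraph.fromEdgeSet (↑T : Set (Sym2 V))).IsTree →
          T ⊆ R T ∧ R T ⊆ G.edgeFinset ∧
            (SimpleGraph.fromEdgeSet (↑(R T) : Set (Sym2 V))).Connected) ∧
      (∀ E' : Finset (Sym2 V), E' ⊆ G.edgeFinset →
          (SimpleGraph.fromEdgeSet (↑E' : Set (Sym2 V))).Connected →
          ∃! T : Finset (Sym2 V),
            T ⊆ G.edgeFinset ∧ (SimpleGraph.fromEdgeSet (↑T : Set (Sym2 V))).IsTree ∧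
              T ⊆ E' ∧ E' ⊆ R T) := by
  classical
  set w : Sym2 V → ℕ := fun e => ((Fintype.equivFin (Sym2 V)) e : ℕ) with hwdef
  have hw : Function.Injective w := by
    intro a b h
    exact (Fintype.equivFin (Sym2 V)).injective (Fin.val_injective h)
  refine ⟨fun T => T ∪ (G.edgeFinset.filter (fun e => e ∉ T ∧ StmtAux.Cond w T e)), ?_, ?_⟩
  · intro T hTG htree
    refine ⟨Finset.subset_union_left, ?_, ?_⟩
    · intro x hx
      rcases Finset.mem_union.mp hx with h | h
      · exact hTG h
      · exact (Finset.mem_filter.mp h).1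
    · exact htree.isConnected.mono
        (SimpleGraph.fromEdgeSet_mono (Finset.coe_subset.mpr Finset.subset_union_left))
  · intro E' hE hconn
    obtain ⟨T, hTE, htree, hcond⟩ := StmtAux.exists_min_tree G w hw hE hconn
    refine ⟨T, ⟨hTE.trans hE, htree, hTE, ?_⟩, ?_⟩
    · intro x hx
      by_cases hxT : x ∈ T
      · exact Finset.mem_union_left _ hxT
      · exact Finset.mem_union_right _ (Finset.mem_filter.mpr ⟨hE hx, hxT, hcond x hx hxT⟩)
    · rintro T' ⟨hT'G, htree', hT'E, hET'⟩
      have hcond' : ∀ e ∈ E', e ∉ T' → StmtAux.Cond w T' e := by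
        intro e heE heT'
        rcases Finset.mem_union.mp (hET' heE) with h | h
        · exact absurd h heT'
        · exact (Finset.mem_filter.mp h).2.2
      exact StmtAux.tree_unique G w hE hT'E htree' hcond' hTE htree hcond
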